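/- Fix n ≥ 1, a classifier M over n features and an entity e over n features. Define the classifier M' over n+1 features by M'(f) = M(f restricted to the first n features), i.e., M' ignores the last feature, and define the entity e' over n+1 features by e'(i) = e(i) for i < n and e'(n) = false. Then for every feature x ∈ Fin n and every q : Fin (n+1) → ℝ with 0 ≤ q i ≤ 1 for all i, one has Shap(M',e',x,q) = Shap(M,e,x,q restricted to the first n coordinates), where on the left SHAP is computed with n+1 features and on the right with n features. -/

import Mathlib

/-- The conditional expectation `φ(M,e,S,p)` of the classifier `M` given that the
entity agrees with `e` on `S`, under the product distribution with parameters `p`. -/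
noncomputable def phi {n : ℕ} (M : (Fin n → Bool) → Bool) (e : Fin n → Bool)
    (S : Finset (Fin n)) (p : Fin n → ℝ) : ℝ :=
  ∑ e' ∈ Finset.univ.filter (fun e' : Fin n → Bool => ∀ i ∈ S, e' i = e i),
    (∏ i ∈ Sᶜ, (if e' i = true then p i else 1 - p i)) *
      (if M e' = true then (1 : ℝ) else 0)

/-- The SHAP score of feature `x` for classifier `M` and entity `e`, under the
product distribution with parameters `p` (with `n` features, the coefficients are
`c_{j,n} = j! (n - j - 1)! / n!`). -/
noncomputable def Shap {n : ℕ} (M : (Fin n → Bool) → Bool) (e : Fin n → Bool)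
    (x : Fin n) (p : Fin n → ℝ) : ℝ :=
  ∑ S ∈ ({x}ᶜ : Finset (Fin n)).powerset,
    ((S.card.factorial * (n - S.card - 1).factorial : ℝ) / n.factorial) *
      (phi M e (insert x S) p - phi M e S p)

open Finset

lemma last_not_mem_map {n : ℕ} (U : Finset (Fin n)) :
    Fin.last n ∉ U.map Fin.castSuccEmb := by
  intro h
  obtain ⟨j, _, hj⟩ := Finset.mem_map.1 h
  exact (Fin.castSucc_lt_last j).ne hj

lemma compl_map_castSucc {n : ℕ} (T : Finset (Fin n)) :
    (T.map Fin.castSuccEmb)ᶜ = insert (Fin.last n) (Tᶜ.map Fin.castSuccEmb) := by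
  ext i
  induction i using Fin.lastCases with
  | last =>
    simp only [Finset.mem_compl, Finset.mem_insert, true_or, iff_true]
    exact last_not_mem_map T
  | cast j =>
    simp only [Finset.mem_compl, Finset.mem_map, Finset.mem_insert, Fin.coe_castSuccEmb]
    simp [Fin.castSucc_injective n |>.eq_iff,
      ((Fin.castSucc_lt_last j).ne : j.castSucc ≠ Fin.last n)]

lemma phi_pair {n : ℕ} (M : (Fin n → Bool) → Bool) (e : Fin n → Bool)
    (M' : (Fin (n + 1) → Bool) → Bool)
    (hM' : ∀ f : Fin (n + 1) → Bool, M' f = M (fun i : Fin n => f i.castSucc))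
    (e' : Fin (n + 1) → Bool) (he' : e' = Fin.snoc e false)
    (q : Fin (n + 1) → ℝ) (T : Finset (Fin n)) :
    phi M' e' (T.map Fin.castSuccEmb) q = phi M e T (fun i => q i.castSucc) ∧
    phi M' e' (insert (Fin.last n) (T.map Fin.castSuccEmb)) q
      = phi M e T (fun i => q i.castSucc) := by
  classical
  have hcomplins : (insert (Fin.last n) (T.map Fin.castSuccEmb))ᶜ = Tᶜ.map Fin.castSuccEmb := by
    rw [Finset.compl_insert, compl_map_castSucc, Finset.erase_insert (last_not_mem_map Tᶜ)]
  -- the sum over Fin (n+1) → Bool as a sum over Bool × (Fin n → Bool)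
  have hsum : ∀ F : (Fin (n + 1) → Bool) → ℝ,
      ∑ g : Fin (n + 1) → Bool, F g
        = ∑ b : Bool, ∑ f : Fin n → Bool, F (Fin.snoc f b) := by
    intro F
    calc ∑ g : Fin (n + 1) → Bool, F g
        = ∑ p : Bool × (Fin n → Bool), F (Fin.snoc p.2 p.1) :=
          (Fintype.sum_equiv (Fin.snocEquiv (fun _ => Bool)) _ _ (fun p => rfl)).symm
      _ = ∑ b : Bool, ∑ f : Fin n → Bool, F (Fin.snoc f b) := Fintype.sum_prod_type _
  have hM : ∀ (f : Fin n → Bool) (b : Bool), M' (Fin.snoc f b) = M f := by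
    intro f b
    rw [hM']
    congr 1
    funext i
    simp
  have hcond : ∀ (f : Fin n → Bool) (b : Bool),
      (∀ i ∈ T.map Fin.castSuccEmb, (Fin.snoc f b : Fin (n + 1) → Bool) i = e' i)
        ↔ (∀ i ∈ T, f i = e i) := by
    intro f b
    subst he'
    constructor
    · intro h i hi
      have := h i.castSucc (Finset.mem_map_of_mem _ hi)
      simpa using this
    · intro h i hi
      obtain ⟨j, hj, rfl⟩ := Finset.mem_map.1 hi
      simp only [Fin.coe_castSuccEmb, Fin.snoc_castSucc]
      exact h j hj
  have hprod : ∀ (f : Fin n → Bool) (b : Bool),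
      (∏ i ∈ Tᶜ.map Fin.castSuccEmb,
          (if (Fin.snoc f b : Fin (n + 1) → Bool) i = true then q i else 1 - q i))
        = ∏ i ∈ Tᶜ, (if f i = true then q i.castSucc else 1 - q i.castSucc) := by
    intro f b
    rw [Finset.prod_map]
    refine Finset.prod_congr rfl fun j _ => ?_
    simp only [Fin.coe_castSuccEmb, Fin.snoc_castSucc]
  constructor
  · -- case without last
    unfold phi
    rw [Finset.sum_filter, Finset.sum_filter, hsum]
    have hinner : ∀ b : Bool,
        (∑ f : Fin n → Bool,
          if (∀ i ∈ T.map Fin.castSuccEmb, (Fin.snoc f b : Fin (n + 1) → Bool) i = e' i)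
          then (∏ i ∈ (T.map Fin.castSuccEmb)ᶜ,
              (if (Fin.snoc f b : Fin (n + 1) → Bool) i = true then q i else 1 - q i)) *
            (if M' (Fin.snoc f b) = true then (1 : ℝ) else 0)
          else 0)
        = (if b then q (Fin.last n) else 1 - q (Fin.last n)) *
          ∑ f : Fin n → Bool,
            (if (∀ i ∈ T, f i = e i)
            then (∏ i ∈ Tᶜ, (if f i = true then q i.castSucc else 1 - q i.castSucc)) *
              (if M f = true then (1 : ℝ) else 0)
            else 0) := by
      intro b
      rw [Finset.mul_sum]
      refine Finset.sum_congr rfl fun f _ => ?_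
      rw [compl_map_castSucc, Finset.prod_insert (last_not_mem_map Tᶜ)]
      by_cases hc : ∀ i ∈ T, f i = e i
      · rw [if_pos ((hcond f b).2 hc), if_pos hc, hprod, hM, Fin.snoc_last]
        ring
      · rw [if_neg (fun h => hc ((hcond f b).1 h)), if_neg hc, mul_zero]
    rw [Fintype.sum_bool, hinner true, hinner false]
    norm_num
    ring
  · -- case with last
    unfold phi
    rw [Finset.sum_filter, Finset.sum_filter, hsum]
    have hcond' : ∀ (f : Fin n → Bool) (b : Bool),
        (∀ i ∈ insert (Fin.last n) (T.map Fin.castSuccEmb),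
            (Fin.snoc f b : Fin (n + 1) → Bool) i = e' i)
          ↔ (b = false ∧ ∀ i ∈ T, f i = e i) := by
      intro f b
      rw [Finset.forall_mem_insert, hcond]
      subst he'
      simp
    have hinner : ∀ b : Bool,
        (∑ f : Fin n → Bool,
          if (∀ i ∈ insert (Fin.last n) (T.map Fin.castSuccEmb),
              (Fin.snoc f b : Fin (n + 1) → Bool) i = e' i)
          then (∏ i ∈ (insert (Fin.last n) (T.map Fin.castSuccEmb))ᶜ,
              (if (Fin.snoc f b : Fin (n + 1) → Bool) i = true then q i else 1 - q i)) *
            (if M' (Fin.snoc f b) = true then (1 : ℝ) else 0)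
          else 0)
        = (if b = false then (1 : ℝ) else 0) *
          ∑ f : Fin n → Bool,
            (if (∀ i ∈ T, f i = e i)
            then (∏ i ∈ Tᶜ, (if f i = true then q i.castSucc else 1 - q i.castSucc)) *
              (if M f = true then (1 : ℝ) else 0)
            else 0) := by
      intro b
      rw [Finset.mul_sum]
      refine Finset.sum_congr rfl fun f _ => ?_
      rw [hcomplins]
      by_cases hb : b = false
      · by_cases hc : ∀ i ∈ T, f i = e i
        · rw [if_pos ((hcond' f b).2 ⟨hb, hc⟩), if_pos hc, hprod, hM, if_pos hb]
          ring
        · rw [if_neg (fun h => hc ((hcond' f b).1 h).2), if_neg hc, mul_zero]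
      · rw [if_neg (fun h => hb ((hcond' f b).1 h).1), if_neg hb, zero_mul]
    rw [Fintype.sum_bool, hinner true, hinner false]
    simp

lemma powerset_map' {α β : Type*} (s : Finset α) (f : α ↪ β) :
    (s.map f).powerset = s.powerset.map (Finset.mapEmbedding f).toEmbedding := by
  ext t
  simp only [Finset.mem_powerset, Finset.mem_map, RelEmbedding.coe_toEmbedding,
    Finset.mapEmbedding_apply, Finset.subset_map_iff]
  constructor
  · rintro ⟨u, hu, rfl⟩; exact ⟨u, hu, rfl⟩
  · rintro ⟨u, hu, rfl⟩; exact ⟨u, hu, rfl⟩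

lemma coeff_id (n j : ℕ) (hj : j + 1 ≤ n) :
    ((j.factorial * (n + 1 - j - 1).factorial : ℝ) / (n + 1).factorial)
      + (((j + 1).factorial * (n + 1 - (j + 1) - 1).factorial : ℝ) / (n + 1).factorial)
      = (j.factorial * (n - j - 1).factorial : ℝ) / n.factorial := by
  obtain ⟨k, rfl⟩ : ∃ k, n = j + 1 + k := ⟨n - (j + 1), by omega⟩
  have h1 : j + 1 + k + 1 - j - 1 = k + 1 := by omega
  have h2 : j + 1 + k + 1 - (j + 1) - 1 = k := by omega
  have h3 : j + 1 + k - j - 1 = k := by omega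
  rw [h1, h2, h3]
  have e1 : (j + 1 + k + 1).factorial = (j + 1 + k + 1) * (j + 1 + k).factorial := by
    rw [← Nat.factorial_succ]
  rw [e1, Nat.factorial_succ k, Nat.factorial_succ j]
  have n1 : ((j + 1 + k).factorial : ℝ) ≠ 0 := Nat.cast_ne_zero.2 (Nat.factorial_ne_zero _)
  have n2 : ((j + 1 + k + 1 : ℕ) : ℝ) ≠ 0 := Nat.cast_ne_zero.2 (by omega)
  field_simp
  push_cast
  ring

theorem shap_ignores_added_dummy_feature
    (n : ℕ) (hn : 1 ≤ n)
    (M : (Fin n → Bool) → Bool) (e : Fin n → Bool)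
    (M' : (Fin (n + 1) → Bool) → Bool)
    (hM' : ∀ f : Fin (n + 1) → Bool, M' f = M (fun i : Fin n => f i.castSucc))
    (e' : Fin (n + 1) → Bool)
    (he' : e' = Fin.snoc e false)
    (x : Fin n)
    (q : Fin (n + 1) → ℝ) (hq : ∀ i, 0 ≤ q i ∧ q i ≤ 1) :
    Shap M' e' x.castSucc q = Shap M e x (fun i : Fin n => q i.castSucc) := by
  classical
  have hx : ({x.castSucc}ᶜ : Finset (Fin (n + 1)))
      = insert (Fin.last n) (({x}ᶜ : Finset (Fin n)).map Fin.castSuccEmb) := by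
    have h1 : ({x.castSucc} : Finset (Fin (n + 1))) = ({x} : Finset (Fin n)).map Fin.castSuccEmb := by
      rw [Finset.map_singleton, Fin.coe_castSuccEmb]
    rw [h1, compl_map_castSucc]
  unfold Shap
  rw [hx, Finset.sum_powerset_insert (last_not_mem_map _), powerset_map',
    Finset.sum_map, Finset.sum_map, ← Finset.sum_add_distrib]
  refine Finset.sum_congr rfl fun T hT => ?_
  simp only [RelEmbedding.coe_toEmbedding, Finset.mapEmbedding_apply]
  have hcard : T.card + 1 ≤ n := by
    have h1 : T.card ≤ ({x}ᶜ : Finset (Fin n)).card :=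
      Finset.card_le_card (Finset.mem_powerset.1 hT)
    have h2 : ({x}ᶜ : Finset (Fin n)).card = n - 1 := by
      rw [Finset.card_compl, Finset.card_singleton, Fintype.card_fin]
    omega
  have hmapins : insert x.castSucc (T.map Fin.castSuccEmb)
      = (insert x T).map Fin.castSuccEmb := by
    rw [Finset.map_insert, Fin.coe_castSuccEmb]
  have hcomm : insert x.castSucc (insert (Fin.last n) (T.map Fin.castSuccEmb))
      = insert (Fin.last n) ((insert x T).map Fin.castSuccEmb) := by
    rw [Finset.insert_comm, hmapins]
  have hpT := phi_pair M e M' hM' e' he' q T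
  have hpxT := phi_pair M e M' hM' e' he' q (insert x T)
  rw [hmapins, hcomm, hpT.1, hpT.2, hpxT.1, hpxT.2,
    Finset.card_map, Finset.card_insert_of_notMem (last_not_mem_map T), Finset.card_map]
  have hco := coeff_id n T.card hcard
  linear_combination
    (phi M e (insert x T) (fun i => q i.castSucc) - phi M e T (fun i => q i.castSucc)) * hco
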